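/- For ι(x) = −log(e^{e^{−x}} − 1), the inequality ι(x)/ι'(x) ≥ x + log log 2 holds for every real x. -/

import Mathlib

open Real

noncomputable def iotaAux (x : ℝ) : ℝ := -Real.log (Real.exp (Real.exp (-x)) - 1)

lemma iotaAux_hasDerivAt (x : ℝ) :
    HasDerivAt iotaAux
      (Real.exp (Real.exp (-x)) * Real.exp (-x) / (Real.exp (Real.exp (-x)) - 1)) x := by
  have hpos : 0 < Real.exp (Real.exp (-x)) - 1 := by
    have : (1 : ℝ) < Real.exp (Real.exp (-x)) := Real.one_lt_exp_iff.2 (Real.exp_pos _)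
    linarith
  have h1 : HasDerivAt (fun y : ℝ => -y) (-1 : ℝ) x := (hasDerivAt_id x).neg
  have h2 : HasDerivAt (fun y : ℝ => Real.exp (-y)) (Real.exp (-x) * (-1)) x :=
    (Real.hasDerivAt_exp (-x)).comp x h1
  have h3 : HasDerivAt (fun y : ℝ => Real.exp (Real.exp (-y)))
      (Real.exp (Real.exp (-x)) * (Real.exp (-x) * (-1))) x :=
    h2.exp
  have h4 : HasDerivAt (fun y : ℝ => Real.exp (Real.exp (-y)) - 1)
      (Real.exp (Real.exp (-x)) * (Real.exp (-x) * (-1))) x := h3.sub_const 1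
  have h5 := (h4.log (ne_of_gt hpos)).neg
  exact h5.congr_deriv (by ring)

lemma iotaAux_deriv (x : ℝ) :
    deriv iotaAux x = Real.exp (Real.exp (-x)) * Real.exp (-x) / (Real.exp (Real.exp (-x)) - 1) :=
  (iotaAux_hasDerivAt x).deriv

lemma exp_sub_one_pos_of (u : ℝ) (hu : 0 < u) : 0 < Real.exp u - 1 := by
  have : (1 : ℝ) < Real.exp u := Real.one_lt_exp_iff.2 hu
  linarith

lemma iotaAux_deriv_pos (x : ℝ) : 0 < deriv iotaAux x := by
  rw [iotaAux_deriv]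
  exact div_pos (mul_pos (Real.exp_pos _) (Real.exp_pos _))
    (exp_sub_one_pos_of _ (Real.exp_pos _))

lemma convexOn_exp_neg : ConvexOn ℝ Set.univ (fun u : ℝ => Real.exp (-u)) := by
  have : ConvexOn ℝ ((-(AffineMap.id ℝ ℝ)) ⁻¹' Set.univ)
      (Real.exp ∘ (-(AffineMap.id ℝ ℝ))) := convexOn_exp.comp_affineMap _
  simpa [Function.comp_def] using this

/-- The function `u ↦ u * e^u / (e^u - 1)` is monotone on positives. -/
lemma key_mono {a b : ℝ} (ha : 0 < a) (hab : a ≤ b) :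
    a * Real.exp a / (Real.exp a - 1) ≤ b * Real.exp b / (Real.exp b - 1) := by
  have hb : 0 < b := lt_of_lt_of_le ha hab
  rcases eq_or_lt_of_le hab with rfl | hab
  · exact le_rfl
  · have hslope := convexOn_exp_neg.slope_mono (Set.mem_univ 0)
      (show a ∈ Set.univ \ {0} by simp [ne_of_gt ha])
      (show b ∈ Set.univ \ {0} by simp [ne_of_gt hb]) (le_of_lt hab)
    rw [slope_def_field, slope_def_field] at hslope
    simp only [neg_zero, Real.exp_zero, sub_zero] at hslope
    -- hslope : (exp (-a) - 1) / a ≤ (exp (-b) - 1) / b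
    have hea := exp_sub_one_pos_of a ha
    have heb := exp_sub_one_pos_of b hb
    have hexa := Real.exp_pos a
    have hexb := Real.exp_pos b
    rw [div_le_div_iff₀ ha hb] at hslope
    rw [div_le_div_iff₀ hea heb]
    rw [Real.exp_neg a, Real.exp_neg b] at hslope
    -- hslope : ((exp a)⁻¹ - 1) * b ≤ ((exp b)⁻¹ - 1) * a
    have h1' : (1 - (Real.exp b)⁻¹) * a ≤ (1 - (Real.exp a)⁻¹) * b := by nlinarith [hslope]
    have ha' : Real.exp a ≠ 0 := ne_of_gt hexa
    have hb' : Real.exp b ≠ 0 := ne_of_gt hexb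
    calc a * Real.exp a * (Real.exp b - 1)
        = ((1 - (Real.exp b)⁻¹) * a) * (Real.exp a * Real.exp b) := by field_simp
      _ ≤ ((1 - (Real.exp a)⁻¹) * b) * (Real.exp a * Real.exp b) :=
          mul_le_mul_of_nonneg_right h1' (le_of_lt (mul_pos hexa hexb))
      _ = b * Real.exp b * (Real.exp a - 1) := by field_simp

lemma iotaAux_deriv_antitone : Antitone (deriv iotaAux) := by
  intro x y hxy
  rw [iotaAux_deriv, iotaAux_deriv]
  have h1 : 0 < Real.exp (-y) := Real.exp_pos _
  have h2 : Real.exp (-y) ≤ Real.exp (-x) := Real.exp_le_exp.2 (by linarith)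
  have := key_mono h1 h2
  calc Real.exp (Real.exp (-y)) * Real.exp (-y) / (Real.exp (Real.exp (-y)) - 1)
      = Real.exp (-y) * Real.exp (Real.exp (-y)) / (Real.exp (Real.exp (-y)) - 1) := by ring_nf
    _ ≤ Real.exp (-x) * Real.exp (Real.exp (-x)) / (Real.exp (Real.exp (-x)) - 1) := this
    _ = Real.exp (Real.exp (-x)) * Real.exp (-x) / (Real.exp (Real.exp (-x)) - 1) := by ring_nf

lemma iotaAux_differentiable : Differentiable ℝ iotaAux :=
  fun x => (iotaAux_hasDerivAt x).differentiableAt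

lemma iotaAux_concave : ConcaveOn ℝ Set.univ iotaAux :=
  iotaAux_deriv_antitone.concaveOn_univ_of_deriv iotaAux_differentiable

lemma iotaAux_zero : iotaAux (-Real.log (Real.log 2)) = 0 := by
  have h2 : (0 : ℝ) < Real.log 2 := Real.log_pos (by norm_num)
  unfold iotaAux
  rw [neg_neg, Real.exp_log h2, Real.exp_log (by norm_num : (0:ℝ) < 2)]
  norm_num

theorem stmt_4 (x : ℝ) :
    iotaAux x / deriv iotaAux x ≥ x + Real.log (Real.log 2) := by
  set x₀ : ℝ := -Real.log (Real.log 2) with hx₀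
  have hd : 0 < deriv iotaAux x := iotaAux_deriv_pos x
  have hgoal : x + Real.log (Real.log 2) = x - x₀ := by rw [hx₀]; ring
  rw [ge_iff_le, hgoal, le_div_iff₀ hd]
  have hdiff := iotaAux_differentiable
  rcases lt_trichotomy x x₀ with h | h | h
  · have hs := iotaAux_concave.slope_le_deriv (Set.mem_univ x) (Set.mem_univ x₀) h (hdiff x)
    rw [slope_def_field, iotaAux_zero] at hs
    have hpos : 0 < x₀ - x := by linarith
    rw [div_le_iff₀ hpos] at hs
    nlinarith
  · rw [h, hx₀]
    simp [iotaAux_zero]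
  · have hs := iotaAux_concave.deriv_le_slope (Set.mem_univ x₀) (Set.mem_univ x) h (hdiff x)
    rw [slope_def_field, iotaAux_zero] at hs
    have hpos : 0 < x - x₀ := by linarith
    rw [le_div_iff₀ hpos] at hs
    nlinarith
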